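/- Let 𝒰 be a set, γ ≥ 0, and let f : ℝ × 𝒰 → ℝ and F : ℝ → ℝ be everywhere positive. Suppose that for all a₁, a₂ ∈ ℝ and all u ∈ 𝒰, exp(−(γ/2)·|a₁ − a₂|) ≤ (f(a₂, u)·F(a₁)) / (f(a₁, u)·F(a₂)) ≤ exp((γ/2)·|a₁ − a₂|). Then for all a₁, a₂ ∈ ℝ and all u, u′ ∈ 𝒰, exp(−γ·|a₁ − a₂|) ≤ (f(a₂, u)·f(a₁, u′)) / (f(a₁, u)·f(a₂, u′)) ≤ exp(γ·|a₁ − a₂|). -/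

import Mathlib

/-- first implication of Lemma 9: if the marginal sensitivity model holds
at parameter `γ/2` — the odds ratio of the latent density `f (·, u)` against the observed
density `F` at any two dose levels is bounded by `exp (±(γ/2)|a₁ - a₂|)` — then the
Rosenbaum-type model holds at parameter `γ`: the odds ratio of the latent density at any
two dose levels and any two confounder values is bounded by `exp (±γ|a₁ - a₂|)`. -/
theorem marginal_half_gamma_implies_rosenbaum_gamma
    {𝒰 : Type*} (γ : ℝ) (hγ : 0 ≤ γ)
    (f : ℝ → 𝒰 → ℝ) (F : ℝ → ℝ)
    (hf : ∀ a u, 0 < f a u) (hF : ∀ a, 0 < F a)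
    (hmodel : ∀ (a₁ a₂ : ℝ) (u : 𝒰),
      Real.exp (-(γ / 2 * |a₁ - a₂|)) ≤ f a₂ u * F a₁ / (f a₁ u * F a₂) ∧
      f a₂ u * F a₁ / (f a₁ u * F a₂) ≤ Real.exp (γ / 2 * |a₁ - a₂|)) :
    ∀ (a₁ a₂ : ℝ) (u u' : 𝒰),
      Real.exp (-(γ * |a₁ - a₂|)) ≤ f a₂ u * f a₁ u' / (f a₁ u * f a₂ u') ∧
      f a₂ u * f a₁ u' / (f a₁ u * f a₂ u') ≤ Real.exp (γ * |a₁ - a₂|) := by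
  intro a₁ a₂ u u'
  obtain ⟨h1, h2⟩ := hmodel a₁ a₂ u
  obtain ⟨h3, h4⟩ := hmodel a₂ a₁ u'
  rw [abs_sub_comm a₂ a₁] at h3 h4
  have key : f a₂ u * f a₁ u' / (f a₁ u * f a₂ u') =
      (f a₂ u * F a₁ / (f a₁ u * F a₂)) * (f a₁ u' * F a₂ / (f a₂ u' * F a₁)) := by
    have h1 := (hf a₁ u).ne'
    have h2 := (hf a₂ u).ne'
    have h3 := (hf a₁ u').ne'
    have h4 := (hf a₂ u').ne'
    have h5 := (hF a₁).ne'
    have h6 := (hF a₂).ne'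
    field_simp
  have hA : 0 < f a₂ u * F a₁ / (f a₁ u * F a₂) :=
    div_pos (mul_pos (hf _ _) (hF _)) (mul_pos (hf _ _) (hF _))
  have hB : 0 < f a₁ u' * F a₂ / (f a₂ u' * F a₁) :=
    div_pos (mul_pos (hf _ _) (hF _)) (mul_pos (hf _ _) (hF _))
  have hexp : Real.exp (γ / 2 * |a₁ - a₂|) * Real.exp (γ / 2 * |a₁ - a₂|)
      = Real.exp (γ * |a₁ - a₂|) := by
    rw [← Real.exp_add]; ring_nf
  have hexp' : Real.exp (-(γ / 2 * |a₁ - a₂|)) * Real.exp (-(γ / 2 * |a₁ - a₂|))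
      = Real.exp (-(γ * |a₁ - a₂|)) := by
    rw [← Real.exp_add]; ring_nf
  constructor
  · rw [key, ← hexp']
    exact mul_le_mul h1 h3 (Real.exp_pos _).le hA.le
  · rw [key, ← hexp]
    exact mul_le_mul h2 h4 hB.le (Real.exp_pos _).le
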